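/- Let T be a triangulated category with a generator F, and let T_1, ..., T_r be a semi-orthogonal sequence of full triangulated subcategories. Then the sequence is full (i.e., a semi-orthogonal decomposition of T) if and only if the triangulated hull of T_1, ..., T_r contains F. -/

import Mathlib

open CategoryTheory Limits Pretriangulated ZeroObject

variable {C : Type*} [Category C] [Preadditive C] [HasZeroObject C] [HasShift C ℤ]
  [∀ n : ℤ, (shiftFunctor C n).Additive] [Pretriangulated C]

/-- A set of objects `P` of a pretriangulated category is *triangulated-closed* if it is
closed under isomorphisms, shifts and cones of distinguished triangles, so it underlies a
strictly full triangulated subcategory. -/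
def IsTriangClosed (P : Set C) : Prop :=
  (∀ X Y : C, (X ≅ Y) → X ∈ P → Y ∈ P) ∧
  (∀ (X : C) (n : ℤ), X ∈ P → (X⟦n⟧ ∈ P)) ∧
  (∀ T ∈ distTriang C, T.obj₁ ∈ P → T.obj₂ ∈ P → T.obj₃ ∈ P)

/-- The *triangulated hull*: the smallest strictly full triangulated subcategory (as a set
of objects) containing a given set `S` of objects. -/
def triangHull (S : Set C) : Set C :=
  {X | ∀ P : Set C, S ⊆ P → IsTriangClosed P → X ∈ P}

lemma isTriangClosed_triangHull (Sset : Set C) : IsTriangClosed (triangHull Sset) :=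
  ⟨fun X Y e hX P hSP hP => hP.1 X Y e (hX P hSP hP),
    fun X n hX P hSP hP => hP.2.1 X n (hX P hSP hP),
    fun T hT h1 h2 P hSP hP => hP.2.2 T hT (h1 P hSP hP) (h2 P hSP hP)⟩

lemma subset_triangHull (Sset : Set C) : Sset ⊆ triangHull Sset :=
  fun _ hX _ hSP _ => hSP hX

/-- Transfer of bijectivity of composition maps along shifts. -/
lemma bij_comp_shift {P : Set C} (hP : ∀ (X : C) (n : ℤ), X ∈ P → ((X⟦n⟧ : C) ∈ P))
    {C0 Y0 : C} (c : C0 ⟶ Y0)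
    (h : ∀ b ∈ P, Function.Bijective (fun ψ : b ⟶ C0 => ψ ≫ c))
    (b : C) (hb : b ∈ P) (m : ℤ) :
    Function.Bijective (fun ψ : b ⟶ (C0⟦m⟧ : C) => ψ ≫ c⟦m⟧') := by
  let e := (shiftEquiv C m).unitIso
  let s : ∀ (W : C), (b ⟶ (W⟦m⟧ : C)) → ((b⟦(-m)⟧ : C) ⟶ W) :=
    fun W φ => φ⟦(-m)⟧' ≫ e.inv.app W
  have hsbij : ∀ W : C, Function.Bijective (s W) := by
    intro W
    constructor
    · intro φ₁ φ₂ hφ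
      apply (shiftFunctor C (-m)).map_injective
      have := hφ
      dsimp [s] at this
      exact (cancel_mono (e.inv.app W)).1 this
    · intro χ
      obtain ⟨φ, hφ⟩ := (shiftFunctor C (-m)).map_surjective (χ ≫ e.hom.app W)
      refine ⟨φ, ?_⟩
      dsimp [s]
      exact (congrArg (· ≫ e.inv.app W) hφ).trans ((Category.assoc _ _ _).trans ((congrArg (χ ≫ ·) (e.hom_inv_id_app W)).trans (Category.comp_id _)))
  have hcomm : ∀ φ : b ⟶ (C0⟦m⟧ : C), s Y0 (φ ≫ c⟦m⟧') = s C0 φ ≫ c := by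
    have hnat := e.inv.naturality c
    dsimp at hnat
    intro φ
    dsimp [s]
    simp only [Functor.map_comp, Category.assoc, hnat]
    exact (Category.assoc _ _ _).trans ((congrArg (_ ≫ ·) hnat).trans (Category.assoc _ _ _).symm)
  constructor
  · intro φ₁ φ₂ hφ
    apply (hsbij C0).injective
    apply (h _ (hP b (-m) hb)).injective
    dsimp
    rw [← hcomm, ← hcomm]
    dsimp at hφ
    rw [hφ]
  · intro ρ
    obtain ⟨χ, hχ⟩ := (h _ (hP b (-m) hb)).surjective (s Y0 ρ)
    obtain ⟨φ, hφ⟩ := (hsbij C0).surjective χ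
    refine ⟨φ, (hsbij Y0).injective ?_⟩
    dsimp
    rw [hcomm, hφ]
    exact hχ

lemma vanish_shift {Z X : C} (hX : ∀ (n : ℤ) (φ : X ⟶ (Z⟦n⟧ : C)), φ = 0) (m : ℤ) :
    ∀ (n : ℤ) (φ : (X⟦m⟧ : C) ⟶ (Z⟦n⟧ : C)), φ = 0 := by
  intro n φ
  let adj := (shiftEquiv C m).toAdjunction
  apply (adj.homEquiv X (Z⟦n⟧)).injective
  have h00 : adj.homEquiv X (Z⟦n⟧) 0 = 0 := by
    rw [Adjunction.homEquiv_unit, Functor.map_zero, Limits.comp_zero]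
  refine Eq.trans ?_ h00.symm
  let i := (shiftFunctorAdd' C n (-m) (n + -m) rfl).app Z
  have h0 : adj.homEquiv X (Z⟦n⟧) φ ≫ i.inv = 0 := hX (n + -m) _
  exact (cancel_mono i.inv).1 (h0.trans Limits.zero_comp.symm)

lemma isTriangClosed_vanish (Z : C) :
    IsTriangClosed {a : C | ∀ (n : ℤ) (φ : a ⟶ (Z⟦n⟧ : C)), φ = 0} := by
  refine ⟨?_, ?_, ?_⟩
  · intro X Y e hX n φ
    rw [← Iso.inv_hom_id_assoc e φ, hX n (e.hom ≫ φ), Limits.comp_zero]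
  · intro X m hX
    exact vanish_shift hX m
  · intro T hT h1 h2 n φ
    obtain ⟨g, hg⟩ := Triangle.yoneda_exact₃ _ hT φ (h2 n (T.mor₂ ≫ φ))
    rw [hg, vanish_shift h1 1 n g, Limits.comp_zero]

lemma semiorth_step (r : ℕ) (S : Fin r → Set C)
    (htri : ∀ i, IsTriangClosed (S i))
    (hadm : ∀ i, (ObjectProperty.ι (· ∈ S i)).IsLeftAdjoint)
    (hsemiorth : ∀ i j : Fin r, i < j → ∀ a ∈ S i, ∀ b ∈ S j, ∀ φ : b ⟶ a, φ = 0)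
    (k : ℕ) (hk : k < r) (Y : C)
    (hY : ∀ i : Fin r, k + 1 ≤ (i : ℕ) → ∀ a ∈ S i, ∀ (n : ℤ) (φ : a ⟶ (Y⟦n⟧ : C)), φ = 0) :
    ∃ Z : C, (∀ i : Fin r, k ≤ (i : ℕ) → ∀ a ∈ S i, ∀ (n : ℤ) (φ : a ⟶ (Z⟦n⟧ : C)), φ = 0) ∧
      ∀ P : Set C, (∀ i, S i ⊆ P) → IsTriangClosed P → Z ∈ P → Y ∈ P := by
  set i₀ : Fin r := ⟨k, hk⟩ with hi₀
  letI := hadm i₀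
  let incl := ObjectProperty.ι (· ∈ S i₀)
  let adj : incl ⊣ incl.rightAdjoint := Adjunction.ofIsLeftAdjoint incl
  let C0 : C := (incl.rightAdjoint.obj Y).obj
  have hC0 : C0 ∈ S i₀ := (incl.rightAdjoint.obj Y).property
  let c : C0 ⟶ Y := adj.counit.app Y
  have L1 : ∀ b, b ∈ S i₀ → Function.Bijective (fun ψ : b ⟶ C0 => ψ ≫ c) := by
    intro b hb
    have heq : (fun ψ : b ⟶ C0 => ψ ≫ c) =
        (adj.homEquiv ⟨b, hb⟩ Y).symm ∘
          ((ObjectProperty.fullyFaithfulι (· ∈ S i₀)).homEquiv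
            (X := ⟨b, hb⟩) (Y := incl.rightAdjoint.obj Y)).symm := by
      funext ψ
      rw [Function.comp_apply, Adjunction.homEquiv_counit]
      rfl
    rw [heq]
    exact (adj.homEquiv ⟨b, hb⟩ Y).symm.bijective.comp (Equiv.bijective _)
  have L2 := bij_comp_shift (htri i₀).2.1 c L1
  obtain ⟨Z, g, h, hT⟩ := Pretriangulated.distinguished_cocone_triangle c
  refine ⟨Z, ?_, ?_⟩
  · intro i hki a ha n φ
    set T' := (Triangle.shiftFunctor C n).obj (Triangle.mk c g h) with hT'def
    have hT' : T' ∈ distTriang C := Pretriangulated.Triangle.shift_distinguished _ hT n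
    by_cases hik : k + 1 ≤ (i : ℕ)
    · have hlt : i₀ < i := by
        rw [Fin.lt_def]
        exact hik
      have hmem : (T'.obj₁⟦(1 : ℤ)⟧ : C) ∈ S i₀ :=
        (htri i₀).2.1 _ 1 ((htri i₀).2.1 _ n hC0)
      have h2 : φ ≫ T'.mor₃ = 0 := hsemiorth i₀ i hlt _ hmem a ha (φ ≫ T'.mor₃)
      obtain ⟨ψ, hψ⟩ := Pretriangulated.Triangle.coyoneda_exact₃ _ hT' φ h2
      rw [hψ, hY i hik a ha n ψ]
      exact Limits.zero_comp
    · have hik' : i = i₀ := Fin.ext (le_antisymm (Nat.lt_succ_iff.mp (not_le.mp hik)) hki)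
      have ha' : a ∈ S i₀ := hik' ▸ ha
      have hb1 : ∀ b ∈ S i₀, Function.Bijective (fun ψ : b ⟶ T'.obj₁ => ψ ≫ T'.mor₁) := by
        intro b hb
        have hmor : T'.mor₁ = n.negOnePow • (c⟦n⟧') := rfl
        have heq : (fun ψ : b ⟶ T'.obj₁ => ψ ≫ T'.mor₁) =
            fun ψ : b ⟶ (C0⟦n⟧ : C) => n.negOnePow • (ψ ≫ c⟦n⟧') := by
          funext ψ
          rw [hmor]
          exact Linear.comp_units_smul _ _ _
        rw [heq]
        refine Function.Bijective.comp ?_ (L2 b hb n)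
        have hinv : ∀ {X' Y' : C} (z : X' ⟶ Y'), n.negOnePow • n.negOnePow • z = z :=
          fun z => (smul_smul _ _ z).trans
            ((congrArg (· • z) (Int.units_mul_self _)).trans (one_smul _ z))
        constructor
        · intro x y hxy
          have h' := congrArg (fun z => n.negOnePow • z) hxy
          exact (hinv x).symm.trans (h'.trans (hinv y))
        · intro y
          exact ⟨n.negOnePow • y, hinv y⟩
      have h1 : (φ ≫ T'.mor₃) ≫ (T'.mor₁)⟦(1 : ℤ)⟧' = 0 := by
        exact (Category.assoc _ _ _).trans ((congrArg (φ ≫ ·)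
          (Pretriangulated.comp_distTriang_mor_zero₃₁ _ hT')).trans Limits.comp_zero)
      have h2 : φ ≫ T'.mor₃ = 0 := by
        apply (bij_comp_shift (htri i₀).2.1 T'.mor₁ hb1 a ha' 1).injective
        dsimp
        rw [h1, Limits.zero_comp]
      obtain ⟨ψ, hψ⟩ := Pretriangulated.Triangle.coyoneda_exact₃ _ hT' φ h2
      obtain ⟨χ, hχ⟩ := (hb1 a ha').surjective ψ
      dsimp at hχ
      rw [hψ, ← hχ, Category.assoc, Pretriangulated.comp_distTriang_mor_zero₁₂ _ hT',
        Limits.comp_zero]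
      rfl
  · intro P hSP hP hZ
    exact hP.2.2 _ (Pretriangulated.inv_rot_of_distTriang _ hT)
      (hP.2.1 Z (-1) hZ) (hSP i₀ hC0)

/-- Let `T` be a triangulated category with a generator `F` and let
`T_1, ..., T_r` be a semi-orthogonal sequence of full triangulated subcategories: each
`T_i` is triangulated, right-admissible (its inclusion admits a right adjoint, i.e. is a
left adjoint), and `Hom(F_j, F_i) = 0` for `i < j`, `F_i ∈ T_i`, `F_j ∈ T_j`.  Then the
sequence is full (the triangulated hull of the `T_i` is all of `T`) if and only if that
hull contains `F`. -/
theorem semiorthogonal_full_iff_generator_mem (F : C)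
    (hF : ∀ E : C, (∀ r : ℤ, ∀ φ : F ⟶ E⟦r⟧, φ = 0) → IsZero E)
    (r : ℕ) (S : Fin r → Set C)
    (htri : ∀ i, IsTriangClosed (S i))
    (hadm : ∀ i, (ObjectProperty.ι (· ∈ S i)).IsLeftAdjoint)
    (hsemiorth : ∀ i j : Fin r, i < j → ∀ a ∈ S i, ∀ b ∈ S j, ∀ φ : b ⟶ a, φ = 0) :
    (∀ X : C, X ∈ triangHull (⋃ i, S i)) ↔ F ∈ triangHull (⋃ i, S i) := by
  constructor
  · intro hfull
    exact hfull F
  · intro hF' X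
    have hUsub : ∀ i, S i ⊆ triangHull (⋃ i, S i) :=
      fun i a ha => subset_triangHull _ (Set.mem_iUnion.2 ⟨i, ha⟩)
    have hhull := isTriangClosed_triangHull (C := C) (⋃ i, S i)
    have main : ∀ d : ℕ, d ≤ r → ∃ Y : C,
        (∀ i : Fin r, r - d ≤ (i : ℕ) → ∀ a ∈ S i, ∀ (n : ℤ) (φ : a ⟶ (Y⟦n⟧ : C)), φ = 0) ∧
        (Y ∈ triangHull (⋃ i, S i) → X ∈ triangHull (⋃ i, S i)) := by
      intro d
      induction d with
      | zero =>
        intro _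
        refine ⟨X, fun i hi => absurd hi ?_, fun hX => hX⟩
        have := i.isLt
        omega
      | succ d ih =>
        intro hd
        obtain ⟨Y, hY, hYX⟩ := ih (Nat.le_of_succ_le hd)
        have hk : r - (d + 1) < r := by omega
        obtain ⟨Z, hZ1, hZ2⟩ := semiorth_step r S htri hadm hsemiorth (r - (d + 1)) hk Y
          (fun i hi a ha => hY i (by omega) a ha)
        exact ⟨Z, hZ1, fun hZ => hYX (hZ2 _ hUsub hhull hZ)⟩
    obtain ⟨Y, hY, hYX⟩ := main r le_rfl
    have hV : triangHull (⋃ i, S i) ⊆ {a : C | ∀ (n : ℤ) (φ : a ⟶ (Y⟦n⟧ : C)), φ = 0} := by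
      intro a ha'
      refine ha' _ (fun b hb => ?_) (isTriangClosed_vanish Y)
      obtain ⟨i, hi⟩ := Set.mem_iUnion.1 hb
      exact hY i (by omega) b hi
    have hYzero : IsZero Y := hF Y (fun n φ => hV hF' n φ)
    have h0 : (0 : C) ∈ triangHull (⋃ i, S i) :=
      hhull.2.2 _ (Pretriangulated.contractible_distinguished F) hF' hF'
    exact hYX (hhull.1 _ _ hYzero.isoZero.symm h0)
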